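/- arXiv:1611.08748 — 2 statements merged into one kernel-verified Lean document; each statement's English description precedes it below -/
import Mathlib

section
/- Assume m is not constant on [0,1] and m' changes sign at most finitely many times on [0,1], i.e. there exists a partition 0 = t₀ < t₁ < ⋯ < t_N = 1 such that on each subinterval [t_{k−1}, t_k] either m'(x) ≥ 0 for all x or m'(x) ≤ 0 for all x. Then λ₁^{𝒟}(s) → ∞ as s → ∞ if and only if one of the following holds: (a) m is strictly increasing on [0,1]; (b) m is strictly decreasing on [0,1]; (c) there exists x₀ ∈ (0,1) such that m is strictly decreasing on [0,x₀] and strictly increasing on [x₀,1]. -/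
open MeasureTheory Filter Set

/-- The Dirichlet principal eigenvalue of `-φ'' - 2 s m' φ' + c φ = λ φ` on `(0,1)`
with `φ(0) = φ(1) = 0`, via its variational characterization. -/
noncomputable def lambdaD (m c : ℝ → ℝ) (s : ℝ) : ℝ :=
  sInf {l : ℝ | ∃ φ : ℝ → ℝ, ContDiff ℝ 1 φ ∧ φ 0 = 0 ∧ φ 1 = 0 ∧
    (∫ x in (0:ℝ)..1, Real.exp (2 * s * m x) * (φ x) ^ 2) = 1 ∧
    l = ∫ x in (0:ℝ)..1, Real.exp (2 * s * m x) * ((deriv φ x) ^ 2 + c x * (φ x) ^ 2)}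

lemma my_cs {f g : ℝ → ℝ} (hf : Continuous f) (hg : Continuous g) {a b : ℝ} (hab : a ≤ b) :
    (∫ t in a..b, f t * g t) ^ 2 ≤ (∫ t in a..b, f t ^ 2) * (∫ t in a..b, g t ^ 2) := by
  set A := ∫ t in a..b, f t ^ 2 with hA
  set B := ∫ t in a..b, g t ^ 2 with hB
  set C := ∫ t in a..b, f t * g t with hC
  have key : ∀ lam : ℝ, 0 ≤ B * (lam * lam) + (-2 * C) * lam + A := by
    intro lam
    have h1 : (∫ t in a..b, (f t - lam * g t) ^ 2) = B * (lam * lam) + (-2 * C) * lam + A := by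
      have e1 : ∀ t : ℝ, (f t - lam * g t) ^ 2
          = (lam * lam) * g t ^ 2 + (-2 * lam) * (f t * g t) + f t ^ 2 := by intro t; ring
      rw [intervalIntegral.integral_congr (fun t _ => e1 t)]
      rw [intervalIntegral.integral_add, intervalIntegral.integral_add,
        intervalIntegral.integral_const_mul, intervalIntegral.integral_const_mul]
      · ring
      · exact (continuous_const.mul (hg.pow 2)).intervalIntegrable _ _
      · exact (continuous_const.mul (hf.mul hg)).intervalIntegrable _ _
      · exact ((continuous_const.mul (hg.pow 2)).add
          (continuous_const.mul (hf.mul hg))).intervalIntegrable _ _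
      · exact (hf.pow 2).intervalIntegrable _ _
    rw [← h1]
    exact intervalIntegral.integral_nonneg hab (fun t _ => sq_nonneg _)
  have hd := discrim_le_zero (a := B) (b := -2 * C) (c := A) key
  rw [discrim] at hd
  nlinarith
open MeasureTheory Filter Set intervalIntegral

def RaySet (m c : ℝ → ℝ) (s : ℝ) : Set ℝ :=
  {l : ℝ | ∃ φ : ℝ → ℝ, ContDiff ℝ 1 φ ∧ φ 0 = 0 ∧ φ 1 = 0 ∧
    (∫ x in (0:ℝ)..1, Real.exp (2 * s * m x) * (φ x) ^ 2) = 1 ∧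
    l = ∫ x in (0:ℝ)..1, Real.exp (2 * s * m x) * ((deriv φ x) ^ 2 + c x * (φ x) ^ 2)}

lemma lambdaD_eq (m c : ℝ → ℝ) (s : ℝ) : lambdaD m c s = sInf (RaySet m c s) := rfl

lemma wcont {m : ℝ → ℝ} (hm : Continuous m) (s : ℝ) :
    Continuous (fun x => Real.exp (2 * s * m x)) :=
  Real.continuous_exp.comp (continuous_const.mul hm)

lemma quad_lower {m c : ℝ → ℝ} (hm : Continuous m) (hc : Continuous c) {M : ℝ}
    (hM : ∀ x ∈ Icc (0:ℝ) 1, |c x| ≤ M) (s : ℝ) {φ : ℝ → ℝ} (hφ : ContDiff ℝ 1 φ)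
    (hnorm : (∫ x in (0:ℝ)..1, Real.exp (2 * s * m x) * (φ x) ^ 2) = 1) :
    (∫ x in (0:ℝ)..1, Real.exp (2 * s * m x) * (deriv φ x) ^ 2) - M
      ≤ ∫ x in (0:ℝ)..1, Real.exp (2 * s * m x) * ((deriv φ x) ^ 2 + c x * (φ x) ^ 2) := by
  have hφc : Continuous φ := hφ.continuous
  have hφ' : Continuous (deriv φ) := hφ.continuous_deriv le_rfl
  have hw := wcont hm s
  have hi1 : IntervalIntegrable (fun x => Real.exp (2 * s * m x) * (deriv φ x) ^ 2)
      volume 0 1 := (hw.mul (hφ'.pow 2)).intervalIntegrable _ _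
  have hi2 : IntervalIntegrable (fun x => Real.exp (2 * s * m x) * (c x * (φ x) ^ 2))
      volume 0 1 := (hw.mul (hc.mul (hφc.pow 2))).intervalIntegrable _ _
  have hsplit : (∫ x in (0:ℝ)..1, Real.exp (2 * s * m x) * ((deriv φ x) ^ 2 + c x * (φ x) ^ 2))
      = (∫ x in (0:ℝ)..1, Real.exp (2 * s * m x) * (deriv φ x) ^ 2)
        + ∫ x in (0:ℝ)..1, Real.exp (2 * s * m x) * (c x * (φ x) ^ 2) := by
    rw [← intervalIntegral.integral_add hi1 hi2]
    exact intervalIntegral.integral_congr (fun x _ => by ring)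
  rw [hsplit]
  have h2 : -M ≤ ∫ x in (0:ℝ)..1, Real.exp (2 * s * m x) * (c x * (φ x) ^ 2) := by
    have hmono : (∫ x in (0:ℝ)..1, (-M) * (Real.exp (2 * s * m x) * (φ x) ^ 2))
        ≤ ∫ x in (0:ℝ)..1, Real.exp (2 * s * m x) * (c x * (φ x) ^ 2) := by
      apply intervalIntegral.integral_mono_on (by norm_num)
        ((continuous_const.mul (hw.mul (hφc.pow 2))).intervalIntegrable _ _) hi2
      intro x hx
      have h1 : -M ≤ c x := neg_le_of_abs_le (hM x hx)
      have h2 : (0:ℝ) ≤ Real.exp (2 * s * m x) * (φ x) ^ 2 :=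
        mul_nonneg (Real.exp_pos _).le (sq_nonneg _)
      calc (-M) * (Real.exp (2 * s * m x) * (φ x) ^ 2)
          ≤ c x * (Real.exp (2 * s * m x) * (φ x) ^ 2) := mul_le_mul_of_nonneg_right h1 h2
        _ = Real.exp (2 * s * m x) * (c x * (φ x) ^ 2) := by ring
    rwa [intervalIntegral.integral_const_mul, hnorm, mul_one] at hmono
  linarith

lemma mem_RaySet {m c : ℝ → ℝ} (hm : Continuous m) (hc : Continuous c) (s : ℝ)
    {ψ : ℝ → ℝ} (hψ : ContDiff ℝ 1 ψ) (h0 : ψ 0 = 0) (h1 : ψ 1 = 0)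
    (hA : 0 < ∫ x in (0:ℝ)..1, Real.exp (2 * s * m x) * (ψ x) ^ 2) :
    (∫ x in (0:ℝ)..1, Real.exp (2 * s * m x) * ((deriv ψ x) ^ 2 + c x * (ψ x) ^ 2))
      / (∫ x in (0:ℝ)..1, Real.exp (2 * s * m x) * (ψ x) ^ 2) ∈ RaySet m c s := by
  set A := ∫ x in (0:ℝ)..1, Real.exp (2 * s * m x) * (ψ x) ^ 2 with hAdef
  set r := (Real.sqrt A)⁻¹ with hrdef
  have hr2 : r ^ 2 = A⁻¹ := by
    rw [hrdef, inv_pow, Real.sq_sqrt hA.le]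
  have hdiffψ : Differentiable ℝ ψ := hψ.differentiable one_ne_zero
  have hderiv : ∀ x, deriv (fun y => r * ψ y) x = r * deriv ψ x := by
    intro x; exact deriv_const_mul r (hdiffψ x)
  refine ⟨fun y => r * ψ y, contDiff_const.mul hψ, by simp [h0], by simp [h1], ?_, ?_⟩
  · have : (∫ x in (0:ℝ)..1, Real.exp (2 * s * m x) * (r * ψ x) ^ 2)
        = ∫ x in (0:ℝ)..1, r ^ 2 * (Real.exp (2 * s * m x) * (ψ x) ^ 2) := by
      exact intervalIntegral.integral_congr (fun x _ => by ring)
    rw [this, intervalIntegral.integral_const_mul, ← hAdef, hr2, inv_mul_cancel₀ hA.ne']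
  · have : (∫ x in (0:ℝ)..1,
        Real.exp (2 * s * m x) * ((deriv (fun y => r * ψ y) x) ^ 2 + c x * (r * ψ x) ^ 2))
        = ∫ x in (0:ℝ)..1, r ^ 2 *
            (Real.exp (2 * s * m x) * ((deriv ψ x) ^ 2 + c x * (ψ x) ^ 2)) := by
      refine intervalIntegral.integral_congr (fun x _ => ?_)
      rw [hderiv x]; ring
    rw [this, intervalIntegral.integral_const_mul, hr2, inv_mul_eq_div]

noncomputable def bump (x₀ δ x : ℝ) : ℝ :=
  Real.smoothTransition ((x - (x₀ - δ)) / (δ / 2)) *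
  Real.smoothTransition (((x₀ + δ) - x) / (δ / 2))

lemma bump_contDiff (x₀ δ : ℝ) : ContDiff ℝ 1 (bump x₀ δ) := by
  apply ContDiff.mul
  · exact Real.smoothTransition.contDiff.comp ((contDiff_id.sub contDiff_const).div_const _)
  · exact Real.smoothTransition.contDiff.comp ((contDiff_const.sub contDiff_id).div_const _)

lemma bump_nonneg (x₀ δ x : ℝ) : 0 ≤ bump x₀ δ x :=
  mul_nonneg (Real.smoothTransition.nonneg _) (Real.smoothTransition.nonneg _)

lemma bump_eq_one {x₀ δ x : ℝ} (hδ : 0 < δ) (h : |x - x₀| ≤ δ / 2) : bump x₀ δ x = 1 := by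
  have h2 : (0:ℝ) < δ / 2 := by linarith
  have h1 := abs_le.1 h
  rw [bump, Real.smoothTransition.one_of_one_le, Real.smoothTransition.one_of_one_le, mul_one]
  · rw [le_div_iff₀ h2]; linarith [h1.2]
  · rw [le_div_iff₀ h2]; linarith [h1.1]

lemma bump_eq_zero_left {x₀ δ x : ℝ} (hδ : 0 < δ) (h : x ≤ x₀ - δ) : bump x₀ δ x = 0 := by
  rw [bump, Real.smoothTransition.zero_of_nonpos, zero_mul]
  apply div_nonpos_of_nonpos_of_nonneg <;> linarith

lemma bump_eq_zero_right {x₀ δ x : ℝ} (hδ : 0 < δ) (h : x₀ + δ ≤ x) : bump x₀ δ x = 0 := by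
  have h2 : ((x₀ + δ) - x) / (δ / 2) ≤ 0 := by
    apply div_nonpos_of_nonpos_of_nonneg <;> linarith
  rw [bump, Real.smoothTransition.zero_of_nonpos h2, mul_zero]

lemma bump_deriv_middle {x₀ δ x : ℝ} (hδ : 0 < δ) (h : |x - x₀| < δ / 2) :
    deriv (bump x₀ δ) x = 0 := by
  have hev : bump x₀ δ =ᶠ[nhds x] (fun _ => (1:ℝ)) := by
    have hopen : IsOpen {y : ℝ | |y - x₀| < δ / 2} := by
      have : {y : ℝ | |y - x₀| < δ / 2} = Metric.ball x₀ (δ / 2) := by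
        ext y; simp [Metric.mem_ball, Real.dist_eq]
      rw [this]; exact Metric.isOpen_ball
    filter_upwards [hopen.mem_nhds h] with y hy
    exact bump_eq_one hδ (le_of_lt hy)
  rw [hev.deriv_eq, deriv_const]

lemma bump_deriv_left {x₀ δ x : ℝ} (hδ : 0 < δ) (h : x < x₀ - δ) :
    deriv (bump x₀ δ) x = 0 := by
  have hev : bump x₀ δ =ᶠ[nhds x] (fun _ => (0:ℝ)) := by
    filter_upwards [Iio_mem_nhds h] with y hy
    exact bump_eq_zero_left hδ (le_of_lt hy)
  rw [hev.deriv_eq, deriv_const]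

lemma bump_deriv_right {x₀ δ x : ℝ} (hδ : 0 < δ) (h : x₀ + δ < x) :
    deriv (bump x₀ δ) x = 0 := by
  have hev : bump x₀ δ =ᶠ[nhds x] (fun _ => (0:ℝ)) := by
    filter_upwards [Ioi_mem_nhds h] with y hy
    exact bump_eq_zero_right hδ (le_of_lt hy)
  rw [hev.deriv_eq, deriv_const]

lemma lemB {m c : ℝ → ℝ} (hm : Continuous m) (hc : Continuous c)
    {x₀ δ η : ℝ} (hδ : 0 < δ) (hη : 0 ≤ η) (h0 : 0 < x₀ - δ) (h1 : x₀ + δ < 1)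
    (hann : ∀ x ∈ Icc (x₀ - δ) (x₀ + δ), δ / 2 ≤ |x - x₀| → m x ≤ m x₀ - η)
    {c₁ c₂ : ℝ} (hc₁ : x₀ - δ / 2 ≤ c₁) (hc12 : c₁ < c₂) (hc₂ : c₂ ≤ x₀ + δ / 2)
    (hJ : ∀ x ∈ Icc c₁ c₂, m x₀ - η / 2 ≤ m x) :
    ∃ C : ℝ, ∀ s ≥ (0:ℝ), lambdaD m c s ≤ C := by
  obtain ⟨M₀, hM₀⟩ := (isCompact_Icc (a := (0:ℝ)) (b := 1)).exists_bound_of_continuousOn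
    hc.continuousOn
  set M := max M₀ 0 with hMdef
  have hM : ∀ x ∈ Icc (0:ℝ) 1, |c x| ≤ M := by
    intro x hx
    calc |c x| = ‖c x‖ := (Real.norm_eq_abs _).symm
      _ ≤ M₀ := hM₀ x hx
      _ ≤ M := le_max_left _ _
  have hMnn : 0 ≤ M := le_max_right _ _
  set χ := bump x₀ δ with hχdef
  have hχcd : ContDiff ℝ 1 χ := bump_contDiff x₀ δ
  have hχc : Continuous χ := hχcd.continuous
  have hχ' : Continuous (deriv χ) := hχcd.continuous_deriv le_rfl
  set K₁ := ∫ x in (0:ℝ)..1, (deriv χ x) ^ 2 with hK₁def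
  have hK₁nn : 0 ≤ K₁ :=
    intervalIntegral.integral_nonneg (by norm_num) (fun x _ => sq_nonneg _)
  set L := c₂ - c₁ with hLdef
  have hLpos : 0 < L := by simp [hLdef]; linarith
  refine ⟨K₁ / L + M, fun s hs => ?_⟩
  set w := fun x => Real.exp (2 * s * m x) with hwdef
  have hwc : Continuous w := wcont hm s
  have hwpos : ∀ x, 0 < w x := fun x => Real.exp_pos _
  set N1 := ∫ x in (0:ℝ)..1, w x * (deriv χ x) ^ 2 with hN1def
  set N2 := ∫ x in (0:ℝ)..1, w x * (c x * (χ x) ^ 2) with hN2def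
  set D := ∫ x in (0:ℝ)..1, w x * (χ x) ^ 2 with hDdef
  have hiD : IntervalIntegrable (fun x => w x * (χ x) ^ 2) volume 0 1 :=
    (hwc.mul (hχc.pow 2)).intervalIntegrable _ _
  have hiN1 : IntervalIntegrable (fun x => w x * (deriv χ x) ^ 2) volume 0 1 :=
    (hwc.mul (hχ'.pow 2)).intervalIntegrable _ _
  have hiN2 : IntervalIntegrable (fun x => w x * (c x * (χ x) ^ 2)) volume 0 1 :=
    (hwc.mul (hc.mul (hχc.pow 2))).intervalIntegrable _ _
  -- lower bound on D
  have hc₁0 : (0:ℝ) ≤ c₁ := by linarith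
  have hc₂1 : c₂ ≤ 1 := by linarith
  have hDlow : Real.exp (2 * s * (m x₀ - η / 2)) * L ≤ D := by
    have step1 : Real.exp (2 * s * (m x₀ - η / 2)) * L
        ≤ ∫ x in c₁..c₂, w x * (χ x) ^ 2 := by
      have hmono : (∫ x in c₁..c₂, Real.exp (2 * s * (m x₀ - η / 2)))
          ≤ ∫ x in c₁..c₂, w x * (χ x) ^ 2 := by
        apply intervalIntegral.integral_mono_on hc12.le
          (intervalIntegrable_const) (hiD.mono_set ?_)
        · intro x hx
          have hx1 : |x - x₀| ≤ δ / 2 := by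
            rw [abs_le]; constructor <;> [linarith [hx.1]; linarith [hx.2]]
          have hχ1 : χ x = 1 := bump_eq_one hδ hx1
          have hmx : m x₀ - η / 2 ≤ m x := hJ x hx
          have : Real.exp (2 * s * (m x₀ - η / 2)) ≤ w x := by
            apply Real.exp_le_exp.2
            have h2s : 0 ≤ 2 * s := by linarith
            exact mul_le_mul_of_nonneg_left hmx h2s
          rw [hχ1]; simpa using this
        · rw [Set.uIcc_of_le hc12.le, Set.uIcc_of_le (by norm_num : (0:ℝ) ≤ 1)]
          exact Set.Icc_subset_Icc hc₁0 hc₂1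
      rwa [intervalIntegral.integral_const, smul_eq_mul, mul_comm] at hmono
    have step2 : (∫ x in c₁..c₂, w x * (χ x) ^ 2) ≤ D := by
      have i1 : IntervalIntegrable (fun x => w x * (χ x) ^ 2) volume 0 c₁ :=
        (hwc.mul (hχc.pow 2)).intervalIntegrable _ _
      have i2 : IntervalIntegrable (fun x => w x * (χ x) ^ 2) volume c₁ c₂ :=
        (hwc.mul (hχc.pow 2)).intervalIntegrable _ _
      have i3 : IntervalIntegrable (fun x => w x * (χ x) ^ 2) volume c₂ 1 :=
        (hwc.mul (hχc.pow 2)).intervalIntegrable _ _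
      have e1 := intervalIntegral.integral_add_adjacent_intervals i1 i2
      have i12 : IntervalIntegrable (fun x => w x * (χ x) ^ 2) volume 0 c₂ :=
        (hwc.mul (hχc.pow 2)).intervalIntegrable _ _
      have e2 := intervalIntegral.integral_add_adjacent_intervals i12 i3
      have n1 : 0 ≤ ∫ x in (0:ℝ)..c₁, w x * (χ x) ^ 2 :=
        intervalIntegral.integral_nonneg hc₁0
          (fun x _ => mul_nonneg (hwpos x).le (sq_nonneg _))
      have n3 : 0 ≤ ∫ x in c₂..1, w x * (χ x) ^ 2 :=
        intervalIntegral.integral_nonneg hc₂1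
          (fun x _ => mul_nonneg (hwpos x).le (sq_nonneg _))
      rw [hDdef]
      linarith [e1, e2]
    linarith
  have hexpLpos : 0 < Real.exp (2 * s * (m x₀ - η / 2)) * L :=
    mul_pos (Real.exp_pos _) hLpos
  have hDpos : 0 < D := lt_of_lt_of_le hexpLpos hDlow
  -- upper bound on N1
  have hN1up : N1 ≤ Real.exp (2 * s * (m x₀ - η)) * K₁ := by
    have hmono : N1 ≤ ∫ x in (0:ℝ)..1, Real.exp (2 * s * (m x₀ - η)) * (deriv χ x) ^ 2 := by
      apply intervalIntegral.integral_mono_on (by norm_num) hiN1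
        ((continuous_const.mul (hχ'.pow 2)).intervalIntegrable _ _)
      intro x _
      by_cases hmid : |x - x₀| < δ / 2
      · rw [bump_deriv_middle hδ hmid]; simp; positivity
      by_cases hl : x < x₀ - δ
      · rw [bump_deriv_left hδ hl]; simp; positivity
      by_cases hr : x₀ + δ < x
      · rw [bump_deriv_right hδ hr]; simp; positivity
      push_neg at hmid hl hr
      have hx : x ∈ Icc (x₀ - δ) (x₀ + δ) := ⟨hl, hr⟩
      have hmx : m x ≤ m x₀ - η := hann x hx hmid
      have : w x ≤ Real.exp (2 * s * (m x₀ - η)) := by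
        apply Real.exp_le_exp.2
        exact mul_le_mul_of_nonneg_left hmx (by linarith)
      exact mul_le_mul_of_nonneg_right this (sq_nonneg _)
    rwa [intervalIntegral.integral_const_mul] at hmono
  have hN1nn : 0 ≤ N1 :=
    intervalIntegral.integral_nonneg (by norm_num)
      (fun x _ => mul_nonneg (hwpos x).le (sq_nonneg _))
  -- upper bound on N2
  have hN2up : N2 ≤ M * D := by
    have hmono : N2 ≤ ∫ x in (0:ℝ)..1, M * (w x * (χ x) ^ 2) := by
      apply intervalIntegral.integral_mono_on (by norm_num) hiN2
        ((continuous_const.mul (hwc.mul (hχc.pow 2))).intervalIntegrable _ _)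
      intro x hx
      have h1 : c x ≤ M := (abs_le.1 (hM x hx)).2
      have h2 : (0:ℝ) ≤ w x * (χ x) ^ 2 := mul_nonneg (hwpos x).le (sq_nonneg _)
      calc w x * (c x * (χ x) ^ 2) = c x * (w x * (χ x) ^ 2) := by ring
        _ ≤ M * (w x * (χ x) ^ 2) := mul_le_mul_of_nonneg_right h1 h2
    rwa [intervalIntegral.integral_const_mul] at hmono
  -- the Rayleigh quotient of χ
  have hmem : (N1 + N2) / D ∈ RaySet m c s := by
    have hsplit : (∫ x in (0:ℝ)..1, w x * ((deriv χ x) ^ 2 + c x * (χ x) ^ 2))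
        = N1 + N2 := by
      rw [hN1def, hN2def, ← intervalIntegral.integral_add hiN1 hiN2]
      exact intervalIntegral.integral_congr (fun x _ => by ring)
    have := mem_RaySet hm hc s hχcd
      (bump_eq_zero_left hδ (by linarith))
      (bump_eq_zero_right hδ (by linarith)) (by rw [← hDdef] at *; exact hDpos)
    rwa [hsplit] at this
  have hbdd : ∀ l ∈ RaySet m c s, -M ≤ l := by
    rintro l ⟨φ, hφ, -, -, hnorm, rfl⟩
    have hql := quad_lower hm hc hM s hφ hnorm
    have hnn : 0 ≤ ∫ x in (0:ℝ)..1, Real.exp (2 * s * m x) * (deriv φ x) ^ 2 :=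
      intervalIntegral.integral_nonneg (by norm_num)
        (fun x _ => mul_nonneg (Real.exp_pos _).le (sq_nonneg _))
    linarith
  have hle : lambdaD m c s ≤ (N1 + N2) / D :=
    csInf_le ⟨-M, fun l hl => hbdd l hl⟩ hmem
  -- final bound
  have hfinal : (N1 + N2) / D ≤ K₁ / L + M := by
    rw [div_le_iff₀ hDpos]
    have hE12 : Real.exp (2 * s * (m x₀ - η)) ≤ Real.exp (2 * s * (m x₀ - η / 2)) := by
      apply Real.exp_le_exp.2
      apply mul_le_mul_of_nonneg_left (by linarith) (by linarith)
    have hQ : K₁ = K₁ / L * L := by field_simp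
    nlinarith [mul_le_mul_of_nonneg_right hE12 hK₁nn,
      mul_le_mul_of_nonneg_left hDlow (div_nonneg hK₁nn hLpos.le)]
  linarith

noncomputable def primA (m : ℝ → ℝ) (s y : ℝ) : ℝ := ∫ t in (0:ℝ)..y, Real.exp (-(2 * s * m t))

noncomputable def epsL (m : ℝ → ℝ) (p s : ℝ) : ℝ :=
  ∫ x in (0:ℝ)..p, Real.exp (2 * s * m x) * primA m s x

noncomputable def epsR (m : ℝ → ℝ) (p s : ℝ) : ℝ :=
  ∫ x in p..1, Real.exp (2 * s * m x) * (primA m s 1 - primA m s x)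

lemma wneg_cont {m : ℝ → ℝ} (hm : Continuous m) (s : ℝ) :
    Continuous (fun t => Real.exp (-(2 * s * m t))) :=
  Real.continuous_exp.comp (continuous_const.mul hm).neg

lemma primA_cont {m : ℝ → ℝ} (hm : Continuous m) (s : ℝ) : Continuous (primA m s) :=
  intervalIntegral.continuous_primitive
    (fun _ _ => ((wneg_cont hm s)).intervalIntegrable _ _) 0

lemma primA_sub {m : ℝ → ℝ} (hm : Continuous m) (s x : ℝ) :
    primA m s 1 - primA m s x = ∫ t in x..1, Real.exp (-(2 * s * m t)) := by
  have h := intervalIntegral.integral_add_adjacent_intervals (μ := volume)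
    (((wneg_cont hm s)).intervalIntegrable 0 x) (((wneg_cont hm s)).intervalIntegrable x 1)
  rw [primA, primA]; linarith

lemma primA_nonneg {m : ℝ → ℝ} (hm : Continuous m) (s : ℝ) {x : ℝ} (hx : 0 ≤ x) :
    0 ≤ primA m s x :=
  intervalIntegral.integral_nonneg hx (fun t _ => (Real.exp_pos _).le)

lemma primA_sub_nonneg {m : ℝ → ℝ} (hm : Continuous m) (s : ℝ) {x : ℝ} (hx : x ≤ 1) :
    0 ≤ primA m s 1 - primA m s x := by
  rw [primA_sub hm s x]
  exact intervalIntegral.integral_nonneg hx (fun t _ => (Real.exp_pos _).le)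

lemma inner_tendsto {m : ℝ → ℝ} (hm : Continuous m) {x a b : ℝ}
    (hge : ∀ t ∈ Ioo a b, m x ≤ m t) (hlt : ∀ t ∈ Ioo a b, m x < m t) :
    Tendsto (fun s => ∫ t in Ioo a b, Real.exp (2 * s * m x - 2 * s * m t) ∂volume) atTop
      (nhds 0) := by
  have h0 : (0:ℝ) = ∫ t in Ioo a b, (0:ℝ) ∂volume := by simp
  rw [h0]
  apply MeasureTheory.tendsto_integral_filter_of_dominated_convergence (fun _ => (1:ℝ))
  · filter_upwards with s
    exact (Real.continuous_exp.comp
      ((continuous_const).sub (continuous_const.mul hm))).aestronglyMeasurable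
  · filter_upwards [eventually_ge_atTop (0:ℝ)] with s hs
    filter_upwards [ae_restrict_mem measurableSet_Ioo] with t ht
    rw [Real.norm_eq_abs, abs_of_pos (Real.exp_pos _)]
    rw [show (1:ℝ) = Real.exp 0 by simp]
    apply Real.exp_le_exp.2
    nlinarith [hge t ht]
  · exact MeasureTheory.integrableOn_const measure_Ioo_lt_top.ne
  · filter_upwards [ae_restrict_mem measurableSet_Ioo] with t ht
    have heq : (fun s => Real.exp (2 * s * m x - 2 * s * m t))
        = fun s => Real.exp (s * (2 * (m x - m t))) := by
      funext s; ring_nf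
    rw [heq]
    have hneg : 2 * (m x - m t) < 0 := by linarith [hlt t ht]
    exact Real.tendsto_exp_atBot.comp ((tendsto_mul_const_atBot_of_neg hneg).2 tendsto_id)

lemma exp_sq (a : ℝ) : Real.exp a ^ 2 = Real.exp (2 * a) := by
  rw [sq, ← Real.exp_add]; ring_nf

lemma hardy_right {m : ℝ → ℝ} (hm : Continuous m) (s : ℝ) {φ : ℝ → ℝ}
    (hφ : ContDiff ℝ 1 φ) (h1 : φ 1 = 0) {x : ℝ} (hx0 : 0 ≤ x) (hx1 : x ≤ 1) :
    (φ x) ^ 2 ≤ (∫ t in (0:ℝ)..1, Real.exp (2 * s * m t) * (deriv φ t) ^ 2)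
      * ∫ t in x..1, Real.exp (-(2 * s * m t)) := by
  have hφ' : Continuous (deriv φ) := hφ.continuous_deriv le_rfl
  set D := ∫ t in (0:ℝ)..1, Real.exp (2 * s * m t) * (deriv φ t) ^ 2 with hD
  set f := fun t => Real.exp (s * m t) * |deriv φ t| with hf
  set g := fun t => Real.exp (-(s * m t)) with hg
  have hfc : Continuous f := (Real.continuous_exp.comp (continuous_const.mul hm)).mul hφ'.abs
  have hgc : Continuous g := Real.continuous_exp.comp (continuous_const.mul hm).neg
  have hftc : φ x = -∫ t in x..1, deriv φ t := by
    have h := intervalIntegral.integral_deriv_eq_sub (f := φ) (a := x) (b := 1)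
      (fun y _ => (hφ.differentiable one_ne_zero).differentiableAt)
      (hφ'.intervalIntegrable x 1)
    rw [h1] at h; linarith
  have habs : |φ x| ≤ ∫ t in x..1, f t * g t := by
    have e1 : (∫ t in x..1, f t * g t) = ∫ t in x..1, |deriv φ t| := by
      refine intervalIntegral.integral_congr (fun t _ => ?_)
      rw [hf, hg]
      have : Real.exp (s * m t) * Real.exp (-(s * m t)) = 1 := by
        rw [← Real.exp_add]; simp
      calc Real.exp (s * m t) * |deriv φ t| * Real.exp (-(s * m t))
          = (Real.exp (s * m t) * Real.exp (-(s * m t))) * |deriv φ t| := by ring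
        _ = |deriv φ t| := by rw [this, one_mul]
    rw [e1, hftc, abs_neg]
    exact intervalIntegral.abs_integral_le_integral_abs hx1
  have hcs := my_cs hfc hgc hx1
  have hf2 : (∫ t in x..1, f t ^ 2) = ∫ t in x..1, Real.exp (2 * s * m t) * (deriv φ t) ^ 2 := by
    refine intervalIntegral.integral_congr (fun t _ => ?_)
    rw [hf, mul_pow, sq_abs, exp_sq]; ring_nf
  have hg2 : (∫ t in x..1, g t ^ 2) = ∫ t in x..1, Real.exp (-(2 * s * m t)) := by
    refine intervalIntegral.integral_congr (fun t _ => ?_)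
    rw [hg, exp_sq]; ring_nf
  have hDx : (∫ t in x..1, Real.exp (2 * s * m t) * (deriv φ t) ^ 2) ≤ D := by
    have hw := wcont hm s
    have h := intervalIntegral.integral_add_adjacent_intervals (μ := volume)
      ((hw.mul (hφ'.pow 2)).intervalIntegrable 0 x) ((hw.mul (hφ'.pow 2)).intervalIntegrable x 1)
    have hn : 0 ≤ ∫ t in (0:ℝ)..x, Real.exp (2 * s * m t) * (deriv φ t) ^ 2 :=
      intervalIntegral.integral_nonneg hx0
        (fun t _ => mul_nonneg (Real.exp_pos _).le (sq_nonneg _))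
    simp only [Pi.mul_apply, Pi.pow_apply] at h; rw [hD]; linarith
  have hgnn : 0 ≤ ∫ t in x..1, g t ^ 2 :=
    intervalIntegral.integral_nonneg hx1 (fun t _ => sq_nonneg _)
  have hIn : 0 ≤ ∫ t in x..1, f t * g t :=
    intervalIntegral.integral_nonneg hx1
      (fun t _ => mul_nonneg (mul_nonneg (Real.exp_pos _).le (abs_nonneg _)) (Real.exp_pos _).le)
  calc (φ x) ^ 2 = |φ x| ^ 2 := (sq_abs _).symm
    _ ≤ (∫ t in x..1, f t * g t) ^ 2 := by
        apply pow_le_pow_left₀ (abs_nonneg _) habs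
    _ ≤ (∫ t in x..1, f t ^ 2) * (∫ t in x..1, g t ^ 2) := hcs
    _ ≤ D * ∫ t in x..1, g t ^ 2 := by
        rw [hf2]; exact mul_le_mul_of_nonneg_right hDx hgnn
    _ = D * ∫ t in x..1, Real.exp (-(2 * s * m t)) := by rw [hg2]

lemma hardy_left {m : ℝ → ℝ} (hm : Continuous m) (s : ℝ) {φ : ℝ → ℝ}
    (hφ : ContDiff ℝ 1 φ) (h0 : φ 0 = 0) {x : ℝ} (hx0 : 0 ≤ x) (hx1 : x ≤ 1) :
    (φ x) ^ 2 ≤ (∫ t in (0:ℝ)..1, Real.exp (2 * s * m t) * (deriv φ t) ^ 2)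
      * ∫ t in (0:ℝ)..x, Real.exp (-(2 * s * m t)) := by
  have hφ' : Continuous (deriv φ) := hφ.continuous_deriv le_rfl
  set D := ∫ t in (0:ℝ)..1, Real.exp (2 * s * m t) * (deriv φ t) ^ 2 with hD
  set f := fun t => Real.exp (s * m t) * |deriv φ t| with hf
  set g := fun t => Real.exp (-(s * m t)) with hg
  have hfc : Continuous f := (Real.continuous_exp.comp (continuous_const.mul hm)).mul hφ'.abs
  have hgc : Continuous g := Real.continuous_exp.comp (continuous_const.mul hm).neg
  have hftc : φ x = ∫ t in (0:ℝ)..x, deriv φ t := by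
    have h := intervalIntegral.integral_deriv_eq_sub (f := φ) (a := 0) (b := x)
      (fun y _ => (hφ.differentiable one_ne_zero).differentiableAt)
      (hφ'.intervalIntegrable 0 x)
    rw [h0] at h; linarith
  have habs : |φ x| ≤ ∫ t in (0:ℝ)..x, f t * g t := by
    have e1 : (∫ t in (0:ℝ)..x, f t * g t) = ∫ t in (0:ℝ)..x, |deriv φ t| := by
      refine intervalIntegral.integral_congr (fun t _ => ?_)
      rw [hf, hg]
      have : Real.exp (s * m t) * Real.exp (-(s * m t)) = 1 := by
        rw [← Real.exp_add]; simp
      calc Real.exp (s * m t) * |deriv φ t| * Real.exp (-(s * m t))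
          = (Real.exp (s * m t) * Real.exp (-(s * m t))) * |deriv φ t| := by ring
        _ = |deriv φ t| := by rw [this, one_mul]
    rw [e1, hftc]
    exact intervalIntegral.abs_integral_le_integral_abs hx0
  have hcs := my_cs hfc hgc hx0
  have hf2 : (∫ t in (0:ℝ)..x, f t ^ 2)
      = ∫ t in (0:ℝ)..x, Real.exp (2 * s * m t) * (deriv φ t) ^ 2 := by
    refine intervalIntegral.integral_congr (fun t _ => ?_)
    rw [hf, mul_pow, sq_abs, exp_sq]; ring_nf
  have hg2 : (∫ t in (0:ℝ)..x, g t ^ 2) = ∫ t in (0:ℝ)..x, Real.exp (-(2 * s * m t)) := by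
    refine intervalIntegral.integral_congr (fun t _ => ?_)
    rw [hg, exp_sq]; ring_nf
  have hDx : (∫ t in (0:ℝ)..x, Real.exp (2 * s * m t) * (deriv φ t) ^ 2) ≤ D := by
    have hw := wcont hm s
    have h := intervalIntegral.integral_add_adjacent_intervals (μ := volume)
      ((hw.mul (hφ'.pow 2)).intervalIntegrable 0 x) ((hw.mul (hφ'.pow 2)).intervalIntegrable x 1)
    have hn : 0 ≤ ∫ t in x..1, Real.exp (2 * s * m t) * (deriv φ t) ^ 2 :=
      intervalIntegral.integral_nonneg hx1
        (fun t _ => mul_nonneg (Real.exp_pos _).le (sq_nonneg _))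
    simp only [Pi.mul_apply, Pi.pow_apply] at h; rw [hD]; linarith
  have hgnn : 0 ≤ ∫ t in (0:ℝ)..x, g t ^ 2 :=
    intervalIntegral.integral_nonneg hx0 (fun t _ => sq_nonneg _)
  calc (φ x) ^ 2 = |φ x| ^ 2 := (sq_abs _).symm
    _ ≤ (∫ t in (0:ℝ)..x, f t * g t) ^ 2 := by
        apply pow_le_pow_left₀ (abs_nonneg _) habs
    _ ≤ (∫ t in (0:ℝ)..x, f t ^ 2) * (∫ t in (0:ℝ)..x, g t ^ 2) := hcs
    _ ≤ D * ∫ t in (0:ℝ)..x, g t ^ 2 := by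
        rw [hf2]; exact mul_le_mul_of_nonneg_right hDx hgnn
    _ = D * ∫ t in (0:ℝ)..x, Real.exp (-(2 * s * m t)) := by rw [hg2]

lemma one_le_D_eps {m : ℝ → ℝ} (hm : Continuous m) {p : ℝ} (hp0 : 0 ≤ p) (hp1 : p ≤ 1)
    (s : ℝ) {φ : ℝ → ℝ} (hφ : ContDiff ℝ 1 φ) (h0 : φ 0 = 0) (h1 : φ 1 = 0)
    (hnorm : (∫ x in (0:ℝ)..1, Real.exp (2 * s * m x) * (φ x) ^ 2) = 1) :
    1 ≤ (∫ t in (0:ℝ)..1, Real.exp (2 * s * m t) * (deriv φ t) ^ 2)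
      * (epsL m p s + epsR m p s) := by
  have hφc : Continuous φ := hφ.continuous
  have hw := wcont hm s
  set D := ∫ t in (0:ℝ)..1, Real.exp (2 * s * m t) * (deriv φ t) ^ 2 with hD
  have hDnn : 0 ≤ D :=
    intervalIntegral.integral_nonneg (by norm_num)
      (fun t _ => mul_nonneg (Real.exp_pos _).le (sq_nonneg _))
  have hA := primA_cont hm s
  have hsplit := intervalIntegral.integral_add_adjacent_intervals (μ := volume)
    ((hw.mul (hφc.pow 2)).intervalIntegrable 0 p) ((hw.mul (hφc.pow 2)).intervalIntegrable p 1)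
  have hleft : (∫ x in (0:ℝ)..p, Real.exp (2 * s * m x) * (φ x) ^ 2) ≤ D * epsL m p s := by
    have hmono : (∫ x in (0:ℝ)..p, Real.exp (2 * s * m x) * (φ x) ^ 2)
        ≤ ∫ x in (0:ℝ)..p, D * (Real.exp (2 * s * m x) * primA m s x) := by
      apply intervalIntegral.integral_mono_on hp0
        ((hw.mul (hφc.pow 2)).intervalIntegrable _ _)
        ((continuous_const.mul (hw.mul hA)).intervalIntegrable _ _)
      intro x hx
      have hh := hardy_left hm s hφ h0 hx.1 (hx.2.trans hp1)
      rw [← hD] at hh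
      have : Real.exp (2 * s * m x) * (φ x) ^ 2
          ≤ Real.exp (2 * s * m x) * (D * primA m s x) := by
        apply mul_le_mul_of_nonneg_left _ (Real.exp_pos _).le
        exact hh
      calc Real.exp (2 * s * m x) * (φ x) ^ 2
          ≤ Real.exp (2 * s * m x) * (D * primA m s x) := this
        _ = D * (Real.exp (2 * s * m x) * primA m s x) := by ring
    rwa [intervalIntegral.integral_const_mul] at hmono
  have hright : (∫ x in p..1, Real.exp (2 * s * m x) * (φ x) ^ 2) ≤ D * epsR m p s := by
    have hmono : (∫ x in p..1, Real.exp (2 * s * m x) * (φ x) ^ 2)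
        ≤ ∫ x in p..1, D * (Real.exp (2 * s * m x) * (primA m s 1 - primA m s x)) := by
      apply intervalIntegral.integral_mono_on hp1
        ((hw.mul (hφc.pow 2)).intervalIntegrable _ _)
        ((continuous_const.mul (hw.mul (continuous_const.sub hA))).intervalIntegrable _ _)
      intro x hx
      have hh := hardy_right hm s hφ h1 (hp0.trans hx.1) hx.2
      rw [← hD, ← primA_sub hm s x] at hh
      have : Real.exp (2 * s * m x) * (φ x) ^ 2
          ≤ Real.exp (2 * s * m x) * (D * (primA m s 1 - primA m s x)) :=
        mul_le_mul_of_nonneg_left hh (Real.exp_pos _).le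
      calc Real.exp (2 * s * m x) * (φ x) ^ 2
          ≤ Real.exp (2 * s * m x) * (D * (primA m s 1 - primA m s x)) := this
        _ = D * (Real.exp (2 * s * m x) * (primA m s 1 - primA m s x)) := by ring
    rwa [intervalIntegral.integral_const_mul] at hmono
  have := hnorm
  simp only [Pi.mul_apply, Pi.pow_apply] at hsplit; rw [← hsplit] at this
  rw [mul_add]
  linarith

lemma eps_pos {m : ℝ → ℝ} (hm : Continuous m) {p : ℝ} (hp0 : 0 ≤ p) (hp1 : p ≤ 1) (s : ℝ) :
    0 < epsL m p s + epsR m p s := by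
  have hw := wcont hm s
  have hA := primA_cont hm s
  have hLnn : 0 ≤ epsL m p s :=
    intervalIntegral.integral_nonneg hp0
      (fun x hx => mul_nonneg (Real.exp_pos _).le (primA_nonneg hm s hx.1))
  have hRnn : 0 ≤ epsR m p s :=
    intervalIntegral.integral_nonneg hp1
      (fun x hx => mul_nonneg (Real.exp_pos _).le (primA_sub_nonneg hm s hx.2))
  rcases lt_or_eq_of_le hp1 with hlt | heq
  · have : 0 < epsR m p s := by
      apply intervalIntegral.intervalIntegral_pos_of_pos_on
        ((hw.mul (continuous_const.sub hA)).intervalIntegrable _ _) _ hlt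
      intro x hx
      apply mul_pos (Real.exp_pos _)
      show 0 < primA m s 1 - primA m s x
      rw [primA_sub hm s x]
      exact intervalIntegral.intervalIntegral_pos_of_pos
        ((wneg_cont hm s).intervalIntegrable _ _) (fun t => Real.exp_pos _) hx.2
    linarith
  · have hp0' : 0 < p := by subst heq; norm_num
    have : 0 < epsL m p s := by
      apply intervalIntegral.intervalIntegral_pos_of_pos_on
        ((hw.mul hA).intervalIntegrable _ _) _ hp0'
      intro x hx
      apply mul_pos (Real.exp_pos _)
      rw [primA]
      exact intervalIntegral.intervalIntegral_pos_of_pos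
        ((wneg_cont hm s).intervalIntegrable _ _) (fun t => Real.exp_pos _) hx.1
    linarith

lemma epsR_tendsto {m : ℝ → ℝ} (hm : Continuous m) {p : ℝ} (hp0 : 0 ≤ p) (hp1 : p ≤ 1)
    (hmono : StrictMonoOn m (Icc p 1)) :
    Tendsto (fun s => epsR m p s) atTop (nhds 0) := by
  have hA := fun s => primA_cont hm s
  have hrw : ∀ s, epsR m p s
      = ∫ x in Ioo p 1, Real.exp (2 * s * m x) * (primA m s 1 - primA m s x) ∂volume := by
    intro s
    rw [epsR, intervalIntegral.integral_of_le hp1, MeasureTheory.integral_Ioc_eq_integral_Ioo]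
  simp only [hrw]
  have h0 : (0:ℝ) = ∫ x in Ioo p 1, (0:ℝ) ∂volume := by simp
  rw [h0]
  apply MeasureTheory.tendsto_integral_filter_of_dominated_convergence (fun _ => (1:ℝ))
  · filter_upwards with s
    exact ((wcont hm s).mul (continuous_const.sub (hA s))).aestronglyMeasurable
  · filter_upwards [eventually_ge_atTop (0:ℝ)] with s hs
    filter_upwards [ae_restrict_mem measurableSet_Ioo] with x hx
    have hnn : 0 ≤ Real.exp (2 * s * m x) * (primA m s 1 - primA m s x) :=
      mul_nonneg (Real.exp_pos _).le (primA_sub_nonneg hm s hx.2.le)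
    rw [Real.norm_eq_abs, abs_of_nonneg hnn]
    -- bound : primA m s 1 - primA m s x ≤ exp(-(2 s m x)) * (1 - x)
    have hb : primA m s 1 - primA m s x ≤ Real.exp (-(2 * s * m x)) * (1 - x) := by
      rw [primA_sub hm s x]
      have hmono2 : (∫ t in x..1, Real.exp (-(2 * s * m t)))
          ≤ ∫ t in x..1, Real.exp (-(2 * s * m x)) := by
        apply intervalIntegral.integral_mono_on hx.2.le
          ((wneg_cont hm s).intervalIntegrable _ _) (intervalIntegrable_const)
        intro t ht
        apply Real.exp_le_exp.2
        have hmx : m x ≤ m t := by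
          rcases eq_or_lt_of_le ht.1 with h | h
          · rw [h]
          · exact (hmono ⟨hx.1.le, hx.2.le⟩ ⟨hx.1.le.trans ht.1, ht.2⟩ h).le
        nlinarith
      rw [mul_comm (Real.exp (-(2 * s * m x))) (1 - x)]
      rwa [intervalIntegral.integral_const, smul_eq_mul] at hmono2
    calc Real.exp (2 * s * m x) * (primA m s 1 - primA m s x)
        ≤ Real.exp (2 * s * m x) * (Real.exp (-(2 * s * m x)) * (1 - x)) :=
          mul_le_mul_of_nonneg_left hb (Real.exp_pos _).le
      _ = (1 - x) := by rw [← mul_assoc, ← Real.exp_add]; simp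
      _ ≤ 1 := by linarith [hx.1, hp0]
  · exact MeasureTheory.integrableOn_const measure_Ioo_lt_top.ne
  · filter_upwards [ae_restrict_mem measurableSet_Ioo] with x hx
    have heq : ∀ s : ℝ, Real.exp (2 * s * m x) * (primA m s 1 - primA m s x)
        = ∫ t in Ioo x 1, Real.exp (2 * s * m x - 2 * s * m t) ∂volume := by
      intro s
      rw [primA_sub hm s x]
      rw [← intervalIntegral.integral_const_mul]
      rw [intervalIntegral.integral_of_le hx.2.le, MeasureTheory.integral_Ioc_eq_integral_Ioo]
      refine MeasureTheory.setIntegral_congr_fun measurableSet_Ioo (fun t _ => ?_)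
      rw [← Real.exp_add]; ring_nf
    simp only [heq]
    apply inner_tendsto hm
    · intro t ht
      rcases eq_or_lt_of_le ht.1.le with h | h
      · rw [h]
      · exact (hmono ⟨hx.1.le, hx.2.le⟩ ⟨hx.1.le.trans ht.1.le, ht.2.le⟩ h).le
    · intro t ht
      exact hmono ⟨hx.1.le, hx.2.le⟩ ⟨hx.1.le.trans ht.1.le, ht.2.le⟩ ht.1

lemma epsL_tendsto {m : ℝ → ℝ} (hm : Continuous m) {p : ℝ} (hp0 : 0 ≤ p) (hp1 : p ≤ 1)
    (hanti : StrictAntiOn m (Icc 0 p)) :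
    Tendsto (fun s => epsL m p s) atTop (nhds 0) := by
  have hA := fun s => primA_cont hm s
  have hrw : ∀ s, epsL m p s
      = ∫ x in Ioo 0 p, Real.exp (2 * s * m x) * primA m s x ∂volume := by
    intro s
    rw [epsL, intervalIntegral.integral_of_le hp0, MeasureTheory.integral_Ioc_eq_integral_Ioo]
  simp only [hrw]
  have key : Tendsto (fun s => ∫ x in Ioo 0 p, Real.exp (2 * s * m x) * primA m s x ∂volume)
      atTop (nhds (∫ x in Ioo 0 p, (0:ℝ) ∂volume)) := by
    apply MeasureTheory.tendsto_integral_filter_of_dominated_convergence (fun _ => (1:ℝ))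
    · filter_upwards with s
      exact ((wcont hm s).mul (hA s)).aestronglyMeasurable
    · filter_upwards [eventually_ge_atTop (0:ℝ)] with s hs
      filter_upwards [ae_restrict_mem measurableSet_Ioo] with x hx
      have hnn : 0 ≤ Real.exp (2 * s * m x) * primA m s x :=
        mul_nonneg (Real.exp_pos _).le (primA_nonneg hm s hx.1.le)
      rw [Real.norm_eq_abs, abs_of_nonneg hnn]
      have hb : primA m s x ≤ Real.exp (-(2 * s * m x)) * x := by
        rw [primA]
        have hmono2 : (∫ t in (0:ℝ)..x, Real.exp (-(2 * s * m t)))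
            ≤ ∫ t in (0:ℝ)..x, Real.exp (-(2 * s * m x)) := by
          apply intervalIntegral.integral_mono_on hx.1.le
            ((wneg_cont hm s).intervalIntegrable _ _) (intervalIntegrable_const)
          intro t ht
          apply Real.exp_le_exp.2
          have hmx : m x ≤ m t := by
            rcases eq_or_lt_of_le ht.2 with h | h
            · rw [h]
            · exact (hanti ⟨ht.1, ht.2.trans hx.2.le⟩
                ⟨hx.1.le, hx.2.le⟩ h).le
          nlinarith
        rw [mul_comm (Real.exp (-(2 * s * m x))) x]
        rwa [intervalIntegral.integral_const, smul_eq_mul, sub_zero] at hmono2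
      calc Real.exp (2 * s * m x) * primA m s x
          ≤ Real.exp (2 * s * m x) * (Real.exp (-(2 * s * m x)) * x) :=
            mul_le_mul_of_nonneg_left hb (Real.exp_pos _).le
        _ = x := by rw [← mul_assoc, ← Real.exp_add]; simp
        _ ≤ 1 := by linarith [hx.2, hp1]
    · exact MeasureTheory.integrableOn_const measure_Ioo_lt_top.ne
    · filter_upwards [ae_restrict_mem measurableSet_Ioo] with x hx
      have heq : ∀ s : ℝ, Real.exp (2 * s * m x) * primA m s x
          = ∫ t in Ioo 0 x, Real.exp (2 * s * m x - 2 * s * m t) ∂volume := by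
        intro s
        rw [primA]
        rw [← intervalIntegral.integral_const_mul]
        rw [intervalIntegral.integral_of_le hx.1.le, MeasureTheory.integral_Ioc_eq_integral_Ioo]
        refine MeasureTheory.setIntegral_congr_fun measurableSet_Ioo (fun t _ => ?_)
        rw [← Real.exp_add]; ring_nf
      simp only [heq]
      apply inner_tendsto hm
      · intro t ht
        exact (hanti ⟨ht.1.le, (ht.2.le.trans hx.2.le)⟩ ⟨hx.1.le, hx.2.le⟩ ht.2).le
      · intro t ht
        exact hanti ⟨ht.1.le, (ht.2.le.trans hx.2.le)⟩ ⟨hx.1.le, hx.2.le⟩ ht.2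
  simpa using key

lemma raySet_nonempty {m c : ℝ → ℝ} (hm : Continuous m) (hc : Continuous c) (s : ℝ) :
    (RaySet m c s).Nonempty := by
  have hsin : ContDiff ℝ 1 (fun x : ℝ => Real.sin (Real.pi * x)) :=
    Real.contDiff_sin.comp (contDiff_const.mul contDiff_id)
  have hApos : 0 < ∫ x in (0:ℝ)..1, Real.exp (2 * s * m x) * (Real.sin (Real.pi * x)) ^ 2 := by
    apply intervalIntegral.intervalIntegral_pos_of_pos_on
      (((wcont hm s).mul ((Real.continuous_sin.comp
        (continuous_const.mul continuous_id)).pow 2)).intervalIntegrable _ _) _ (by norm_num)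
    intro x hx
    apply mul_pos (Real.exp_pos _)
    have hsp : 0 < Real.sin (Real.pi * x) := by
      apply Real.sin_pos_of_pos_of_lt_pi
      · exact mul_pos Real.pi_pos hx.1
      · nlinarith [Real.pi_pos, hx.2]
    exact pow_pos hsp 2
  exact ⟨_, mem_RaySet hm hc s hsin (by simp) (by simp) hApos⟩

lemma lemC {m c : ℝ → ℝ} (hm : Continuous m) (hc : Continuous c) {p : ℝ}
    (hp : p ∈ Icc (0:ℝ) 1) (hanti : StrictAntiOn m (Icc 0 p))
    (hmono : StrictMonoOn m (Icc p 1)) :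
    Tendsto (lambdaD m c) atTop atTop := by
  obtain ⟨M₀, hM₀⟩ := (isCompact_Icc (a := (0:ℝ)) (b := 1)).exists_bound_of_continuousOn
    hc.continuousOn
  set M := max M₀ 0 with hMdef
  have hM : ∀ x ∈ Icc (0:ℝ) 1, |c x| ≤ M := by
    intro x hx
    calc |c x| = ‖c x‖ := (Real.norm_eq_abs _).symm
      _ ≤ M₀ := hM₀ x hx
      _ ≤ M := le_max_left _ _
  set eps := fun s => epsL m p s + epsR m p s with hepsdef
  have heps_pos : ∀ s, 0 < eps s := fun s => eps_pos hm hp.1 hp.2 s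
  have hlow : ∀ s : ℝ, (eps s)⁻¹ - M ≤ lambdaD m c s := by
    intro s
    rw [lambdaD_eq]
    apply le_csInf (raySet_nonempty hm hc s)
    rintro l ⟨φ, hφ, h0, h1, hnorm, rfl⟩
    have h1le := one_le_D_eps hm hp.1 hp.2 s hφ h0 h1 hnorm
    set D := ∫ t in (0:ℝ)..1, Real.exp (2 * s * m t) * (deriv φ t) ^ 2 with hD
    have hDge : (eps s)⁻¹ ≤ D := by
      rw [inv_eq_one_div, div_le_iff₀ (heps_pos s)]
      simpa [hepsdef] using h1le
    have hq := quad_lower hm hc hM s hφ hnorm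
    linarith
  have heps0 : Tendsto eps atTop (nhds 0) := by
    have := (epsL_tendsto hm hp.1 hp.2 hanti).add (epsR_tendsto hm hp.1 hp.2 hmono)
    simpa using this
  have hinv : Tendsto (fun s => (eps s)⁻¹) atTop atTop := by
    apply tendsto_inv_nhdsGT_zero.comp
    rw [tendsto_nhdsWithin_iff]
    exact ⟨heps0, Eventually.of_forall (fun s => heps_pos s)⟩
  have htop : Tendsto (fun s => (eps s)⁻¹ - M) atTop atTop := by
    simpa [sub_eq_add_neg] using tendsto_atTop_add_const_right atTop (-M) hinv
  exact tendsto_atTop_mono hlow htop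

lemma tmono {N : ℕ} {t : ℕ → ℝ} (ht : ∀ k < N, t k < t (k + 1)) :
    ∀ i j, i ≤ j → j ≤ N → t i ≤ t j := by
  intro i j hij hj
  obtain ⟨d, rfl⟩ := Nat.exists_eq_add_of_le hij
  clear hij
  induction d with
  | zero => simp
  | succ n ih =>
    have h1 : t i ≤ t (i + n) := ih (by omega)
    have h2 : t (i + n) < t (i + n + 1) := ht _ (by omega)
    have : i + (n + 1) = (i + n) + 1 := by omega
    rw [this]
    linarith

lemma cover_left {N : ℕ} {t : ℕ → ℝ} (ht : ∀ k < N, t k < t (k + 1)) :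
    ∀ K, K ≤ N → ∀ x, t 0 ≤ x → x ≤ t K → 0 < K →
      ∃ k < K, x ∈ Icc (t k) (t (k + 1)) := by
  intro K
  induction K with
  | zero => intro _ x _ _ h; omega
  | succ n ih =>
    intro hn x hx0 hxK _
    by_cases hc : x ≤ t n
    · rcases Nat.eq_zero_or_pos n with h0 | hpos
      · subst h0
        exact ⟨0, by omega, ⟨hx0, by linarith [ht 0 (by omega)]⟩⟩
      · obtain ⟨k, hk, hmem⟩ := ih (by omega) x hx0 hc hpos
        exact ⟨k, by omega, hmem⟩
    · push_neg at hc
      exact ⟨n, by omega, ⟨hc.le, hxK⟩⟩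

lemma cover_right {N : ℕ} {t : ℕ → ℝ} (ht : ∀ k < N, t k < t (k + 1)) :
    ∀ d K, K + d = N → ∀ x, t K ≤ x → x ≤ t N → 0 < d →
      ∃ k, K ≤ k ∧ k < N ∧ x ∈ Icc (t k) (t (k + 1)) := by
  intro d
  induction d with
  | zero => intro K _ x _ _ h; omega
  | succ n ih =>
    intro K hKn x hxK hxN _
    by_cases hc : x ≤ t (K + 1)
    · exact ⟨K, le_rfl, by omega, ⟨hxK, hc⟩⟩
    · push_neg at hc
      rcases Nat.eq_zero_or_pos n with h0 | hpos
      · exfalso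
        have : K + 1 = N := by omega
        rw [this] at hc
        linarith
      · obtain ⟨k, hk1, hk2, hmem⟩ := ih (K + 1) (by omega) x hc.le hxN hpos
        exact ⟨k, by omega, hk2, hmem⟩

lemma strict_of_mono_noconst {m : ℝ → ℝ} {a b : ℝ}
    (hmono : MonotoneOn m (Icc a b)) (ha : 0 ≤ a) (hb : b ≤ 1)
    (hnc : ∀ u v : ℝ, 0 ≤ u → u < v → v ≤ 1 → ¬∀ x ∈ Icc u v, m x = m u) :
    StrictMonoOn m (Icc a b) := by
  intro x hx y hy hxy
  rcases lt_or_eq_of_le (hmono hx hy hxy.le) with h | h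
  · exact h
  · exfalso
    apply hnc x y (ha.trans hx.1) hxy (hy.2.trans hb)
    intro z hz
    have hz' : z ∈ Icc a b := ⟨hx.1.trans hz.1, hz.2.trans hy.2⟩
    have h1 : m x ≤ m z := hmono hx hz' hz.1
    have h2 : m z ≤ m y := hmono hz' hy hz.2
    linarith [h.symm]

lemma strict_of_anti_noconst {m : ℝ → ℝ} {a b : ℝ}
    (hanti : AntitoneOn m (Icc a b)) (ha : 0 ≤ a) (hb : b ≤ 1)
    (hnc : ∀ u v : ℝ, 0 ≤ u → u < v → v ≤ 1 → ¬∀ x ∈ Icc u v, m x = m u) :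
    StrictAntiOn m (Icc a b) := by
  intro x hx y hy hxy
  rcases lt_or_eq_of_le (hanti hx hy hxy.le) with h | h
  · exact h
  · exfalso
    apply hnc x y (ha.trans hx.1) hxy (hy.2.trans hb)
    intro z hz
    have hz' : z ∈ Icc a b := ⟨hx.1.trans hz.1, hz.2.trans hy.2⟩
    have h1 : m z ≤ m x := hanti hx hz' hz.1
    have h2 : m y ≤ m z := hanti hz' hy hz.2
    linarith

lemma strictAntiOn_singleton {m : ℝ → ℝ} (a : ℝ) : StrictAntiOn m (Icc a a) := by
  intro x hx y hy hxy
  simp only [Icc_self, mem_singleton_iff] at hx hy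
  subst hx; subst hy; exact absurd hxy (lt_irrefl _)

lemma strictMonoOn_singleton {m : ℝ → ℝ} (a : ℝ) : StrictMonoOn m (Icc a a) := by
  intro x hx y hy hxy
  simp only [Icc_self, mem_singleton_iff] at hx hy
  subst hx; subst hy; exact absurd hxy (lt_irrefl _)

/-- For `m` nonconstant whose derivative changes sign at most finitely many times,
the Dirichlet principal eigenvalue `λ₁^𝒟(s)` tends to `∞` as `s → ∞` iff `m` is
strictly increasing, strictly decreasing, or strictly decreasing then strictly
increasing on `[0,1]`. -/
theorem lambdaD_tendsto_atTop_iff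
    (m c : ℝ → ℝ) (hm : ContDiff ℝ 2 m) (hc : Continuous c)
    (hnc : ¬ ∀ x ∈ Set.Icc (0:ℝ) 1, m x = m 0)
    (hsign : ∃ N : ℕ, 0 < N ∧ ∃ t : ℕ → ℝ, t 0 = 0 ∧ t N = 1 ∧
      (∀ k < N, t k < t (k + 1)) ∧
      (∀ k < N, (∀ x ∈ Set.Icc (t k) (t (k + 1)), 0 ≤ deriv m x) ∨
                (∀ x ∈ Set.Icc (t k) (t (k + 1)), deriv m x ≤ 0))) :
    Tendsto (lambdaD m c) Filter.atTop Filter.atTop ↔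
      (StrictMonoOn m (Set.Icc (0:ℝ) 1) ∨ StrictAntiOn m (Set.Icc (0:ℝ) 1) ∨
        ∃ x₀ ∈ Set.Ioo (0:ℝ) 1,
          StrictAntiOn m (Set.Icc (0:ℝ) x₀) ∧ StrictMonoOn m (Set.Icc x₀ 1)) := by
  classical
  have hmc : Continuous m := hm.continuous
  have hdm : Differentiable ℝ m := hm.differentiable two_ne_zero
  constructor
  · intro htend
    by_contra hshape
    suffices hbdd : ∃ C, ∀ s ≥ (0:ℝ), lambdaD m c s ≤ C by
      obtain ⟨C, hC⟩ := hbdd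
      obtain ⟨s, hgt, hge⟩ := ((htend.eventually_gt_atTop C).and (eventually_ge_atTop 0)).exists
      exact absurd (hC s hge) (not_le.2 hgt)
    by_cases hconst : ∃ u v : ℝ, 0 ≤ u ∧ u < v ∧ v ≤ 1 ∧ ∀ x ∈ Icc u v, m x = m u
    · -- plateau case
      obtain ⟨u, v, hu, huv, hv, hcst⟩ := hconst
      set x₀ := (u + v) / 2 with hx₀def
      have hx₀u : u < x₀ := by rw [hx₀def]; linarith
      have hx₀v : x₀ < v := by rw [hx₀def]; linarith
      have hx₀0 : 0 < x₀ := lt_of_le_of_lt hu hx₀u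
      have hx₀1 : x₀ < 1 := lt_of_lt_of_le hx₀v hv
      set δ := min ((v - u) / 4) (min (x₀ / 2) ((1 - x₀) / 2)) with hδdef
      have hδ : 0 < δ := by
        apply lt_min (by linarith)
        exact lt_min (by linarith) (by linarith)
      have hδ1 : δ ≤ (v - u) / 4 := min_le_left _ _
      have hδ2 : δ ≤ x₀ / 2 := le_trans (min_le_right _ _) (min_le_left _ _)
      have hδ3 : δ ≤ (1 - x₀) / 2 := le_trans (min_le_right _ _) (min_le_right _ _)
      have h0 : 0 < x₀ - δ := by linarith
      have h1 : x₀ + δ < 1 := by linarith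
      have hsub : Icc (x₀ - δ) (x₀ + δ) ⊆ Icc u v :=
        Icc_subset_Icc (by rw [hx₀def]; linarith) (by rw [hx₀def]; linarith)
      have hmx₀ : m x₀ = m u := hcst x₀ ⟨hx₀u.le, hx₀v.le⟩
      apply lemB (η := 0) (c₁ := x₀ - δ / 2) (c₂ := x₀ + δ / 2) hmc hc hδ le_rfl h0 h1
      · intro x hx _
        have hxe : m x = m u := hcst x (hsub hx)
        rw [hxe, hmx₀, sub_zero]
      · exact le_rfl
      · linarith
      · exact le_rfl
      · intro x hx
        have hxe : m x = m u := hcst x (hsub ⟨by linarith [hx.1], by linarith [hx.2]⟩)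
        rw [hxe, hmx₀]
        norm_num
    · have hnc2 : ∀ u v : ℝ, 0 ≤ u → u < v → v ≤ 1 → ¬∀ x ∈ Icc u v, m x = m u :=
        fun u v h1 h2 h3 h4 => hconst ⟨u, v, h1, h2, h3, h4⟩
      obtain ⟨N, hNpos, t, ht0, htN, htlt, hsgn⟩ := hsign
      have hpbound : ∀ k, k < N → 0 ≤ t k ∧ t (k + 1) ≤ 1 := by
        intro k hk
        constructor
        · rw [← ht0]; exact tmono htlt 0 k (Nat.zero_le _) hk.le
        · rw [← htN]; exact tmono htlt (k + 1) N (by omega) le_rfl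
      have hstrictpiece : ∀ k, k < N → StrictMonoOn m (Icc (t k) (t (k + 1)))
          ∨ StrictAntiOn m (Icc (t k) (t (k + 1))) := by
        intro k hk
        rcases hsgn k hk with hpos | hneg
        · left
          apply strict_of_mono_noconst _ (hpbound k hk).1 (hpbound k hk).2 hnc2
          apply monotoneOn_of_deriv_nonneg (convex_Icc _ _) hmc.continuousOn
            hdm.differentiableOn
          intro y hy; rw [interior_Icc] at hy
          exact hpos y (Ioo_subset_Icc_self hy)
        · right
          apply strict_of_anti_noconst _ (hpbound k hk).1 (hpbound k hk).2 hnc2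
          apply antitoneOn_of_deriv_nonpos (convex_Icc _ _) hmc.continuousOn
            hdm.differentiableOn
          intro y hy; rw [interior_Icc] at hy
          exact hneg y (Ioo_subset_Icc_self hy)
      by_cases hjunc : ∃ k, k + 1 < N ∧ StrictMonoOn m (Icc (t k) (t (k + 1)))
          ∧ StrictAntiOn m (Icc (t (k + 1)) (t (k + 2)))
      · -- interior strict local max
        obtain ⟨k, hkN, hup, hdn⟩ := hjunc
        set x₀ := t (k + 1) with hx₀def
        have htk1 : t k < t (k + 1) := htlt k (by omega)
        have htk2 : t (k + 1) < t (k + 2) := htlt (k + 1) hkN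
        have htk0 : 0 ≤ t k := (hpbound k (by omega)).1
        have htk21 : t (k + 2) ≤ 1 := (hpbound (k + 1) hkN).2
        set δ := min (t (k + 1) - t k) (t (k + 2) - t (k + 1)) / 2 with hδdef
        have hδ : 0 < δ := by
          apply div_pos _ (by norm_num)
          exact lt_min (by linarith) (by linarith)
        have hδ1 : δ ≤ (t (k + 1) - t k) / 2 := by
          have := min_le_left (t (k + 1) - t k) (t (k + 2) - t (k + 1))
          rw [hδdef]; linarith
        have hδ2 : δ ≤ (t (k + 2) - t (k + 1)) / 2 := by
          have := min_le_right (t (k + 1) - t k) (t (k + 2) - t (k + 1))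
          rw [hδdef]; linarith
        have h0 : 0 < x₀ - δ := by
          have hx₀pos : 0 < x₀ := lt_of_le_of_lt htk0 htk1
          rw [hx₀def] at *; linarith
        have h1 : x₀ + δ < 1 := by rw [hx₀def] at *; linarith
        have hup' : StrictMonoOn m (Icc (x₀ - δ) x₀) :=
          hup.mono (Icc_subset_Icc (by rw [hx₀def] at *; linarith) le_rfl)
        have hdn' : StrictAntiOn m (Icc x₀ (x₀ + δ)) :=
          hdn.mono (Icc_subset_Icc le_rfl (by rw [hx₀def] at *; linarith))
        have hL : m (x₀ - δ / 2) < m x₀ :=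
          hup' ⟨by linarith, by linarith⟩ ⟨by linarith, le_rfl⟩ (by linarith)
        have hR : m (x₀ + δ / 2) < m x₀ :=
          hdn' ⟨le_rfl, by linarith⟩ ⟨by linarith, by linarith⟩ (by linarith)
        set η := m x₀ - max (m (x₀ - δ / 2)) (m (x₀ + δ / 2)) with hηdef
        have hη : 0 < η := sub_pos.2 (max_lt hL hR)
        have hmaxeq : m x₀ - η = max (m (x₀ - δ / 2)) (m (x₀ + δ / 2)) := by
          rw [hηdef]; ring
        have hcont : ContinuousAt m x₀ := hmc.continuousAt
        rw [Metric.continuousAt_iff] at hcont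
        obtain ⟨θ, hθpos, hθ⟩ := hcont (η / 2) (half_pos hη)
        set r := min (θ / 2) (δ / 2) with hrdef
        have hr : 0 < r := lt_min (by linarith) (by linarith)
        have hrδ : r ≤ δ / 2 := min_le_right _ _
        have hrθ : r < θ := lt_of_le_of_lt (min_le_left _ _) (by linarith)
        apply lemB (η := η) (c₁ := x₀ - r) (c₂ := x₀ + r) hmc hc hδ hη.le h0 h1
        · intro x hx hdist
          rcases le_or_gt x x₀ with hxle | hxgt
          · have habs : |x - x₀| = x₀ - x := by
              rw [abs_of_nonpos (by linarith)]; ring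
            rw [habs] at hdist
            have hmle : m x ≤ m (x₀ - δ / 2) :=
              hup'.monotoneOn ⟨hx.1, by linarith⟩ ⟨by linarith, by linarith⟩ (by linarith)
            rw [hmaxeq]
            exact le_trans hmle (le_max_left _ _)
          · have habs : |x - x₀| = x - x₀ := abs_of_nonneg (by linarith)
            rw [habs] at hdist
            have hmle : m x ≤ m (x₀ + δ / 2) :=
              hdn'.antitoneOn ⟨by linarith, by linarith⟩ ⟨by linarith, hx.2⟩ (by linarith)
            rw [hmaxeq]
            exact le_trans hmle (le_max_right _ _)
        · linarith
        · linarith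
        · linarith
        · intro x hx
          have hd : dist x x₀ < θ := by
            rw [Real.dist_eq]
            have : |x - x₀| ≤ r := abs_le.2 ⟨by linarith [hx.1], by linarith [hx.2]⟩
            linarith
          have hmd := hθ hd
          rw [Real.dist_eq] at hmd
          have := (abs_lt.1 hmd).1
          linarith
      · -- no junction : the shape holds, contradiction with hshape
        exfalso; apply hshape
        have hKdata : ∃ K, K ≤ N ∧ (∀ k, k < K → StrictAntiOn m (Icc (t k) (t (k + 1))))
            ∧ (∀ k, K ≤ k → k < N → StrictMonoOn m (Icc (t k) (t (k + 1)))) := by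
          by_cases hex : ∃ k, k < N ∧ StrictMonoOn m (Icc (t k) (t (k + 1)))
          · refine ⟨Nat.find hex, (Nat.find_spec hex).1.le, ?_, ?_⟩
            · intro k hk
              have hkN : k < N := lt_trans hk (Nat.find_spec hex).1
              refine (hstrictpiece k hkN).resolve_left (fun h => ?_)
              exact Nat.find_min hex hk ⟨hkN, h⟩
            · intro k hk hkN'
              induction k, hk using Nat.le_induction with
              | base => exact (Nat.find_spec hex).2
              | succ n hn ih =>
                have hnN : n < N := by omega
                have hmn := ih hnN
                rcases hstrictpiece (n + 1) hkN' with h | h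
                · exact h
                · exact absurd ⟨n, hkN', hmn, h⟩ hjunc
          · refine ⟨N, le_rfl, ?_, ?_⟩
            · intro k hk
              exact (hstrictpiece k hk).resolve_left (fun h => hex ⟨k, hk, h⟩)
            · intro k hk hkN; omega
        obtain ⟨K, hKN, hbefore, hafter⟩ := hKdata
        have hK0 : (0:ℝ) ≤ t K := by rw [← ht0]; exact tmono htlt 0 K (Nat.zero_le _) hKN
        have hK1 : t K ≤ 1 := by rw [← htN]; exact tmono htlt K N hKN le_rfl
        have hAglobal : StrictAntiOn m (Icc 0 (t K)) := by
          apply strict_of_anti_noconst _ le_rfl hK1 hnc2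
          apply antitoneOn_of_deriv_nonpos (convex_Icc _ _) hmc.continuousOn
            hdm.differentiableOn
          intro x hx; rw [interior_Icc] at hx
          have hKpos : 0 < K := by
            rcases Nat.eq_zero_or_pos K with h | h
            · exfalso; rw [h, ht0] at hx; exact absurd (hx.1.trans hx.2) (lt_irrefl 0)
            · exact h
          obtain ⟨k, hkK, hmem⟩ :=
            cover_left htlt K hKN x (by rw [ht0]; exact hx.1.le) hx.2.le hKpos
          have hkN : k < N := lt_of_lt_of_le hkK hKN
          rcases hsgn k hkN with hpos | hneg
          · exfalso
            have hmonok : MonotoneOn m (Icc (t k) (t (k + 1))) := by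
              apply monotoneOn_of_deriv_nonneg (convex_Icc _ _) hmc.continuousOn
                hdm.differentiableOn
              intro y hy; rw [interior_Icc] at hy; exact hpos y (Ioo_subset_Icc_self hy)
            have h1 := hbefore k hkK (left_mem_Icc.2 (htlt k hkN).le)
              (right_mem_Icc.2 (htlt k hkN).le) (htlt k hkN)
            have h2 := hmonok (left_mem_Icc.2 (htlt k hkN).le)
              (right_mem_Icc.2 (htlt k hkN).le) (htlt k hkN).le
            linarith
          · exact hneg x hmem
        have hMglobal : StrictMonoOn m (Icc (t K) 1) := by
          apply strict_of_mono_noconst _ hK0 le_rfl hnc2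
          have hmono0 : MonotoneOn m (Icc (t K) (t N)) := by
            apply monotoneOn_of_deriv_nonneg (convex_Icc _ _) hmc.continuousOn
              hdm.differentiableOn
            intro x hx; rw [interior_Icc] at hx
            have hKltN : K < N := by
              rcases lt_or_eq_of_le hKN with h | h
              · exact h
              · exfalso; rw [h] at hx; exact absurd (hx.1.trans hx.2) (lt_irrefl _)
            obtain ⟨k, hKk, hkN, hmem⟩ :=
              cover_right htlt (N - K) K (by omega) x hx.1.le hx.2.le (by omega)
            rcases hsgn k hkN with hpos | hneg
            · exact hpos x hmem
            · exfalso
              have hantik : AntitoneOn m (Icc (t k) (t (k + 1))) := by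
                apply antitoneOn_of_deriv_nonpos (convex_Icc _ _) hmc.continuousOn
                  hdm.differentiableOn
                intro y hy; rw [interior_Icc] at hy; exact hneg y (Ioo_subset_Icc_self hy)
              have h1 := hafter k hKk hkN (left_mem_Icc.2 (htlt k hkN).le)
                (right_mem_Icc.2 (htlt k hkN).le) (htlt k hkN)
              have h2 := hantik (left_mem_Icc.2 (htlt k hkN).le)
                (right_mem_Icc.2 (htlt k hkN).le) (htlt k hkN).le
              linarith
          rwa [htN] at hmono0
        rcases eq_or_lt_of_le hK0 with h0 | h0
        · left; rw [← h0] at hMglobal; exact hMglobal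
        rcases eq_or_lt_of_le hK1 with h1 | h1
        · right; left; rw [h1] at hAglobal; exact hAglobal
        · right; right; exact ⟨t K, ⟨h0, h1⟩, hAglobal, hMglobal⟩
  · rintro (hmono | hanti | ⟨x₀, hx₀, hanti, hmono⟩)
    · exact lemC hmc hc ⟨le_rfl, zero_le_one⟩ (strictAntiOn_singleton 0) hmono
    · have : StrictMonoOn m (Icc (1:ℝ) 1) := strictMonoOn_singleton 1
      exact lemC hmc hc ⟨zero_le_one, le_rfl⟩ hanti this
    · exact lemC hmc hc ⟨hx₀.1.le, hx₀.2.le⟩ hanti hmono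
end

section
/- Let k > 0 and r > 0, and let W : [−r, r] → ℝ be continuous on [−r, r], twice continuously differentiable on (−r, r), and satisfy W(x) > 0 and W''(x) ≥ 2 k² W(x) for every x ∈ (−r, r). Then W(0) ≤ e^{1 − k r} · max{ W(−r), W(r) }. -/
open Set

/-- Half-interval comparison: if `W'' ≥ 2k²W > 0` on `(-r, r)` and `W'(0) ≥ 0`,
then `W(0) cosh(kr) ≤ W(r)`. -/
lemma aux_half
    (k r : ℝ) (hk : 0 < k) (hr : 0 < r)
    (W : ℝ → ℝ)
    (hWcont : ContinuousOn W (Set.Icc (-r) r))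
    (hW2 : ContDiffOn ℝ 2 W (Set.Ioo (-r) r))
    (hpos : ∀ x ∈ Set.Ioo (-r) r, 0 < W x)
    (hineq : ∀ x ∈ Set.Ioo (-r) r, 2 * k ^ 2 * W x ≤ deriv (deriv W) x)
    (h0 : 0 ≤ deriv W 0) :
    W 0 * Real.cosh (k * r) ≤ W r := by
  have hnr : -r < (0:ℝ) := by linarith
  have hsub : Ico (0:ℝ) r ⊆ Ioo (-r) r := fun x hx => ⟨lt_of_lt_of_le hnr hx.1, hx.2⟩
  -- derivatives of W
  have hWd : ∀ x ∈ Ioo (-r) r, HasDerivAt W (deriv W x) x := by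
    intro x hx
    exact ((hW2.contDiffAt (isOpen_Ioo.mem_nhds hx)).differentiableAt
      (by norm_num)).hasDerivAt
  have hW1 : ContDiffOn ℝ 1 (deriv W) (Ioo (-r) r) :=
    hW2.deriv_of_isOpen isOpen_Ioo (by norm_num)
  have hW'd : ∀ x ∈ Ioo (-r) r, HasDerivAt (deriv W) (deriv (deriv W) x) x := by
    intro x hx
    exact ((hW1.contDiffAt (isOpen_Ioo.mem_nhds hx)).differentiableAt
      (by norm_num)).hasDerivAt
  -- derivatives of cosh(kx), sinh(kx)
  have hc : ∀ x : ℝ, HasDerivAt (fun y => Real.cosh (k * y)) (k * Real.sinh (k * x)) x := by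
    intro x
    have := (Real.hasDerivAt_cosh (k * x)).comp x ((hasDerivAt_id x).const_mul k)
    simpa [Function.comp_def, mul_comm] using this
  have hs : ∀ x : ℝ, HasDerivAt (fun y => Real.sinh (k * y)) (k * Real.cosh (k * x)) x := by
    intro x
    have := (Real.hasDerivAt_sinh (k * x)).comp x ((hasDerivAt_id x).const_mul k)
    simpa [Function.comp_def, mul_comm] using this
  set F : ℝ → ℝ := fun x => deriv W x * Real.cosh (k * x) - W x * (k * Real.sinh (k * x))
    with hFdef
  have hF : ∀ x ∈ Ioo (-r) r, HasDerivAt F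
      (deriv (deriv W) x * Real.cosh (k * x) - W x * (k * (k * Real.cosh (k * x)))) x := by
    intro x hx
    have h1 := (hW'd x hx).mul (hc x)
    have h2 := (hWd x hx).mul ((hs x).const_mul k)
    have := h1.sub h2
    exact this.congr_deriv (by ring)
  have hFderiv : ∀ x ∈ Ioo (-r) r, 0 ≤ deriv F x := by
    intro x hx
    rw [(hF x hx).deriv]
    have hch := Real.cosh_pos (x := k * x)
    have h1 := hineq x hx
    have h2 := hpos x hx
    nlinarith [mul_le_mul_of_nonneg_right h1 hch.le, mul_pos h2 hch, sq_nonneg k,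
      mul_pos (mul_pos hk hk) (mul_pos h2 hch)]
  have hFmono : MonotoneOn F (Ico 0 r) := by
    apply monotoneOn_of_deriv_nonneg (convex_Ico 0 r)
    · exact fun x hx => ((hF x (hsub hx)).differentiableAt.continuousAt).continuousWithinAt
    · intro x hx
      rw [interior_Ico] at hx
      exact ((hF x (hsub (Ioo_subset_Ico_self hx))).differentiableAt).differentiableWithinAt
    · intro x hx
      rw [interior_Ico] at hx
      exact hFderiv x (hsub (Ioo_subset_Ico_self hx))
  have hF0 : F 0 = deriv W 0 := by simp [hFdef]
  have hFnn : ∀ x ∈ Ico (0:ℝ) r, 0 ≤ F x := by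
    intro x hx
    have := hFmono (Set.mem_Ico.mpr ⟨le_refl 0, hr⟩) hx hx.1
    rw [hF0] at this
    linarith
  -- g = W / cosh(kx) is monotone on [0, r)
  have hg : ∀ x ∈ Ioo (-r) r, HasDerivAt (fun y => W y / Real.cosh (k * y))
      (F x / Real.cosh (k * x) ^ 2) x := by
    intro x hx
    exact (hWd x hx).div (hc x) ((Real.cosh_pos (x := k * x)).ne')
  have hgmono : MonotoneOn (fun y => W y / Real.cosh (k * y)) (Ico 0 r) := by
    apply monotoneOn_of_deriv_nonneg (convex_Ico 0 r)
    · exact fun x hx => ((hg x (hsub hx)).differentiableAt.continuousAt).continuousWithinAt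
    · intro x hx
      rw [interior_Ico] at hx
      exact ((hg x (hsub (Ioo_subset_Ico_self hx))).differentiableAt).differentiableWithinAt
    · intro x hx
      rw [interior_Ico] at hx
      rw [(hg x (hsub (Ioo_subset_Ico_self hx))).deriv]
      exact div_nonneg (hFnn x (Ioo_subset_Ico_self hx)) (sq_nonneg _)
  have key : ∀ b ∈ Ico (0:ℝ) r, W 0 * Real.cosh (k * b) ≤ W b := by
    intro b hb
    have := hgmono (Set.mem_Ico.mpr ⟨le_refl 0, hr⟩) hb hb.1
    simp only [mul_zero, Real.cosh_zero, div_one] at this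
    exact (le_div_iff₀ (Real.cosh_pos (x := k * b))).mp this
  -- take the limit b → r⁻
  have hne : (nhdsWithin r (Ico (0:ℝ) r)).NeBot := by
    refine mem_closure_iff_nhdsWithin_neBot.mp ?_
    rw [closure_Ico hr.ne]
    exact Set.right_mem_Icc.mpr hr.le
  have htend : Filter.Tendsto (fun b => W b - W 0 * Real.cosh (k * b))
      (nhdsWithin r (Ico (0:ℝ) r)) (nhds (W r - W 0 * Real.cosh (k * r))) := by
    have h1 : Filter.Tendsto W (nhdsWithin r (Ico (0:ℝ) r)) (nhds (W r)) := by
      have := hWcont.continuousWithinAt (Set.mem_Icc.mpr ⟨by linarith, le_refl r⟩)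
      exact this.mono_left (nhdsWithin_mono r
        (fun x hx => ⟨by linarith [hx.1], hx.2.le⟩))
    exact h1.sub (((Real.continuous_cosh.comp (continuous_const.mul continuous_id)).tendsto r
      ).mono_left nhdsWithin_le_nhds |>.const_mul (W 0))
  have hlim : (0:ℝ) ≤ W r - W 0 * Real.cosh (k * r) :=
    ge_of_tendsto htend (Filter.eventually_iff_exists_mem.mpr
      ⟨Ico 0 r, self_mem_nhdsWithin, fun b hb => by linarith [key b hb]⟩)
  linarith

/-- Lemma 3.2 (one-dimensional comparison estimate): if `W > 0` and
`W'' ≥ 2 k² W` on `(−r, r)`, with `W` continuous up to the endpoints, then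
`W(0) ≤ e^{1 − k r} max{W(−r), W(r)}`. -/
theorem comparison_estimate
    (k r : ℝ) (hk : 0 < k) (hr : 0 < r)
    (W : ℝ → ℝ)
    (hWcont : ContinuousOn W (Set.Icc (-r) r))
    (hW2 : ContDiffOn ℝ 2 W (Set.Ioo (-r) r))
    (hpos : ∀ x ∈ Set.Ioo (-r) r, 0 < W x)
    (hineq : ∀ x ∈ Set.Ioo (-r) r, 2 * k ^ 2 * W x ≤ deriv (deriv W) x) :
    W 0 ≤ Real.exp (1 - k * r) * max (W (-r)) (W r) := by
  have h0mem : (0:ℝ) ∈ Ioo (-r) r := ⟨by linarith, hr⟩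
  have hW0 : 0 < W 0 := hpos 0 h0mem
  -- main step: W 0 * cosh (k r) ≤ max (W (-r)) (W r)
  have main : W 0 * Real.cosh (k * r) ≤ max (W (-r)) (W r) := by
    rcases le_total 0 (deriv W 0) with h0 | h0
    · exact le_trans (aux_half k r hk hr W hWcont hW2 hpos hineq h0) (le_max_right _ _)
    · -- apply the half lemma to V x = W (-x)
      set V : ℝ → ℝ := fun x => W (-x) with hVdef
      have hmapIoo : ∀ x ∈ Ioo (-r) r, -x ∈ Ioo (-r) r :=
        fun x hx => ⟨by linarith [hx.2], by linarith [hx.1]⟩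
      have hWd : ∀ x ∈ Ioo (-r) r, HasDerivAt W (deriv W x) x := by
        intro x hx
        exact ((hW2.contDiffAt (isOpen_Ioo.mem_nhds hx)).differentiableAt
          (by norm_num)).hasDerivAt
      have hW1 : ContDiffOn ℝ 1 (deriv W) (Ioo (-r) r) :=
        hW2.deriv_of_isOpen isOpen_Ioo (by norm_num)
      have hW'd : ∀ x ∈ Ioo (-r) r, HasDerivAt (deriv W) (deriv (deriv W) x) x := by
        intro x hx
        exact ((hW1.contDiffAt (isOpen_Ioo.mem_nhds hx)).differentiableAt
          (by norm_num)).hasDerivAt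
      have hVd : ∀ x ∈ Ioo (-r) r, HasDerivAt V (-(deriv W (-x))) x := by
        intro x hx
        have := (hWd (-x) (hmapIoo x hx)).comp x (hasDerivAt_neg x)
        simpa [hVdef, Function.comp_def, mul_comm] using this
      have hderivV : ∀ x ∈ Ioo (-r) r, deriv V x = -(deriv W (-x)) :=
        fun x hx => (hVd x hx).deriv
      have hV'd : ∀ x ∈ Ioo (-r) r, deriv (deriv V) x = deriv (deriv W) (-x) := by
        intro x hx
        have heq : deriv V =ᶠ[nhds x] (fun y => -(deriv W (-y))) := by
          filter_upwards [isOpen_Ioo.mem_nhds hx] with y hy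
          exact hderivV y hy
        have hrhs : HasDerivAt (fun y => -(deriv W (-y))) (deriv (deriv W) (-x)) x := by
          have := ((hW'd (-x) (hmapIoo x hx)).comp x (hasDerivAt_neg x)).neg
          simpa [Function.comp_def, Pi.neg_def] using this
        rw [Filter.EventuallyEq.deriv_eq heq]
        exact hrhs.deriv
      have hVcont : ContinuousOn V (Icc (-r) r) := by
        apply hWcont.comp continuous_neg.continuousOn
        intro x hx
        simp only [Set.mem_Icc] at hx ⊢
        constructor <;> linarith
      have hV2 : ContDiffOn ℝ 2 V (Ioo (-r) r) := by
        apply hW2.comp contDiff_neg.contDiffOn hmapIoo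
      have hVpos : ∀ x ∈ Ioo (-r) r, 0 < V x := fun x hx => hpos (-x) (hmapIoo x hx)
      have hVineq : ∀ x ∈ Ioo (-r) r, 2 * k ^ 2 * V x ≤ deriv (deriv V) x := by
        intro x hx
        rw [hV'd x hx]
        exact hineq (-x) (hmapIoo x hx)
      have hV0 : 0 ≤ deriv V 0 := by
        rw [hderivV 0 h0mem]
        simpa using neg_nonneg.mpr h0
      have := aux_half k r hk hr V hVcont hV2 hVpos hVineq hV0
      simp only [hVdef, neg_zero] at this
      exact le_trans this (le_max_left _ _)
  -- from W 0 * cosh(kr) ≤ M conclude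
  set M := max (W (-r)) (W r) with hMdef
  have hM : 0 < M := lt_of_lt_of_le (mul_pos hW0 (Real.cosh_pos (x := k * r))) main
  have hcosh : Real.exp (k * r) / 2 ≤ Real.cosh (k * r) := by
    rw [Real.cosh_eq]
    have := (Real.exp_pos (-(k * r))).le
    linarith
  have hexp1 : (2:ℝ) ≤ Real.exp 1 := by
    have := Real.add_one_le_exp 1
    linarith
  have hkey : W 0 * Real.exp (k * r) ≤ 2 * M := by
    nlinarith [mul_le_mul_of_nonneg_left hcosh hW0.le]
  have hek : 0 < Real.exp (k * r) := Real.exp_pos _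
  rw [show (1 - k * r) = 1 + (-(k * r)) by ring, Real.exp_add, Real.exp_neg,
    ← sub_nonneg]
  have heq : Real.exp 1 * (Real.exp (k * r))⁻¹ * M - W 0
      = ((Real.exp 1 * M - W 0 * Real.exp (k * r)) * (Real.exp (k * r))⁻¹) := by
    field_simp
  rw [heq]
  apply mul_nonneg _ (inv_nonneg.mpr hek.le)
  nlinarith [mul_nonneg (by linarith : (0:ℝ) ≤ Real.exp 1 - 2) hM.le]
end
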